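/- Let (x(t), ξ(t)) be a solution of the geodesic Hamiltonian system of H¹ on an interval I such that x = (x¹,x²,x³) is horizontally regular, i.e. (ẋ¹)² + (ẋ²)² > 0 on I. Then the T-variation of x vanishes identically, i.e. x¹ẋ² − ẋ¹x² + ẋ³ = 0 on I, and the p-curvature k(t) = (ẋ¹ẍ² − ẍ¹ẋ²)/((ẋ¹)² + (ẋ²)²)^{3/2} is constant on I. -/

import Mathlib

open Set Real

lemma const_of_hasDerivAt_zero' {f : ℝ → ℝ} {s : Set ℝ} (hso : IsOpen s)
    (hs : Convex ℝ s) (h : ∀ t ∈ s, HasDerivAt f 0 t)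
    {a b : ℝ} (ha : a ∈ s) (hb : b ∈ s) : f a = f b := by
  refine hs.is_const_of_fderivWithin_eq_zero
    (fun t ht => ((h t ht).differentiableAt).differentiableWithinAt) (fun t ht => ?_) ha hb
  rw [fderivWithin_of_isOpen hso ht, ((h t ht).hasFDerivAt).fderiv]
  ext
  simp

/-- **Geodesics of the Heisenberg group have vanishing T-variation and constant
p-curvature.**  If `(x, ξ)` solves the geodesic Hamiltonian system of `H¹` on an open
interval `I` and `x` is horizontally regular there, then the T-variation
`x¹ẋ² - ẋ¹x² + ẋ³` vanishes identically on `I` and the p-curvature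
`(ẋ¹ẍ² - ẍ¹ẋ²)/((ẋ¹)² + (ẋ²)²)^{3/2}` is constant on `I`. -/
theorem geodesic_tVariation_zero_pCurvature_const
    (I : Set ℝ) (hIopen : IsOpen I) (hIinterval : I.OrdConnected)
    (x₁ x₂ x₃ ξ₁ ξ₂ ξ₃ : ℝ → ℝ)
    (h₁ : ∀ t ∈ I, HasDerivAt x₁ (ξ₁ t + x₂ t * ξ₃ t) t)
    (h₂ : ∀ t ∈ I, HasDerivAt x₂ (ξ₂ t - x₁ t * ξ₃ t) t)
    (h₃ : ∀ t ∈ I, HasDerivAt x₃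
      (x₂ t * ξ₁ t - x₁ t * ξ₂ t + ξ₃ t * ((x₁ t) ^ 2 + (x₂ t) ^ 2)) t)
    (h₄ : ∀ t ∈ I, HasDerivAt ξ₁ (ξ₂ t * ξ₃ t - x₁ t * (ξ₃ t) ^ 2) t)
    (h₅ : ∀ t ∈ I, HasDerivAt ξ₂ (-(ξ₁ t * ξ₃ t) - x₂ t * (ξ₃ t) ^ 2) t)
    (h₆ : ∀ t ∈ I, HasDerivAt ξ₃ 0 t)
    (hreg : ∀ t ∈ I, 0 < (deriv x₁ t) ^ 2 + (deriv x₂ t) ^ 2) :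
    (∀ t ∈ I, x₁ t * deriv x₂ t - deriv x₁ t * x₂ t + deriv x₃ t = 0) ∧
    (∃ k₀ : ℝ, ∀ t ∈ I,
      (deriv x₁ t * deriv (deriv x₂) t - deriv (deriv x₁) t * deriv x₂ t)
          / ((deriv x₁ t) ^ 2 + (deriv x₂ t) ^ 2) ^ ((3 : ℝ) / 2) = k₀) := by
  have hconv : Convex ℝ I := convex_iff_ordConnected.mpr hIinterval
  -- abbreviations for the horizontal velocity components
  set a : ℝ → ℝ := fun t => ξ₁ t + x₂ t * ξ₃ t with ha_def
  set b : ℝ → ℝ := fun t => ξ₂ t - x₁ t * ξ₃ t with hb_def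
  have hd₁ : ∀ t ∈ I, deriv x₁ t = a t := fun t ht => (h₁ t ht).deriv
  have hd₂ : ∀ t ∈ I, deriv x₂ t = b t := fun t ht => (h₂ t ht).deriv
  have hd₃ : ∀ t ∈ I, deriv x₃ t
      = x₂ t * ξ₁ t - x₁ t * ξ₂ t + ξ₃ t * ((x₁ t) ^ 2 + (x₂ t) ^ 2) :=
    fun t ht => (h₃ t ht).deriv
  -- derivatives of a and b
  have hda : ∀ t ∈ I, HasDerivAt a (2 * ξ₃ t * b t) t := by
    intro t ht
    have := ((h₄ t ht).add (((h₂ t ht).mul (h₆ t ht))))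
    refine HasDerivAt.congr_deriv this ?_
    simp [ha_def, hb_def]; ring
  have hdb : ∀ t ∈ I, HasDerivAt b (-(2 * ξ₃ t * a t)) t := by
    intro t ht
    have := ((h₅ t ht).sub (((h₁ t ht).mul (h₆ t ht))))
    refine HasDerivAt.congr_deriv this ?_
    simp [ha_def, hb_def]; ring
  constructor
  · intro t ht
    rw [hd₁ t ht, hd₂ t ht, hd₃ t ht]
    simp only [ha_def, hb_def]; ring
  · rcases I.eq_empty_or_nonempty with rfl | ⟨t₀, ht₀⟩
    · exact ⟨0, fun t ht => absurd ht (notMem_empty t)⟩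
    -- ξ₃ is constant, and the horizontal speed a² + b² is constant
    have hξ₃ : ∀ t ∈ I, ξ₃ t = ξ₃ t₀ :=
      fun t ht => const_of_hasDerivAt_zero' hIopen hconv h₆ ht ht₀
    have hN : ∀ t ∈ I, a t ^ 2 + b t ^ 2 = a t₀ ^ 2 + b t₀ ^ 2 := by
      intro t ht
      refine const_of_hasDerivAt_zero' (f := fun s => a s ^ 2 + b s ^ 2) hIopen hconv (fun s hs => ?_) ht ht₀
      have := (((hda s hs).pow 2).add ((hdb s hs).pow 2))
      refine HasDerivAt.congr_deriv this ?_
      ring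
    -- second derivatives
    have hdd₁ : ∀ t ∈ I, deriv (deriv x₁) t = 2 * ξ₃ t * b t := by
      intro t ht
      have heq : deriv x₁ =ᶠ[nhds t] a :=
        Filter.eventuallyEq_of_mem (hIopen.mem_nhds ht) hd₁
      rw [Filter.EventuallyEq.deriv_eq heq]
      exact (hda t ht).deriv
    have hdd₂ : ∀ t ∈ I, deriv (deriv x₂) t = -(2 * ξ₃ t * a t) := by
      intro t ht
      have heq : deriv x₂ =ᶠ[nhds t] b :=
        Filter.eventuallyEq_of_mem (hIopen.mem_nhds ht) hd₂
      rw [Filter.EventuallyEq.deriv_eq heq]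
      exact (hdb t ht).deriv
    refine ⟨-(2 * ξ₃ t₀ * (a t₀ ^ 2 + b t₀ ^ 2)) / (a t₀ ^ 2 + b t₀ ^ 2) ^ ((3:ℝ)/2),
      fun t ht => ?_⟩
    rw [hd₁ t ht, hd₂ t ht, hdd₁ t ht, hdd₂ t ht, hξ₃ t ht]
    have : a t * -(2 * ξ₃ t₀ * a t) - 2 * ξ₃ t₀ * b t * b t
        = -(2 * ξ₃ t₀ * (a t ^ 2 + b t ^ 2)) := by ring
    rw [this, hN t ht]
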